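/- Fix an integer $q \ge 1$, real numbers $a_0>0, a_1,\dots,a_{q-1}$, and $Q(x) := -x^{-q}(\frac{a_0}{q} + \frac{a_1}{q-1}x + \cdots + a_{q-1}x^{q-1})$. Let $P_1, P_2$ be distinct $q$-short positive polynomials (in particular $P_i(0)=0$). Then $\lim_{x \to 0^+} |Q(P_1(x)) - Q(P_2(x))| = +\infty$. -/

import Mathlib

open Filter Set Polynomial

noncomputable def Npoly (q : ℕ) (a : ℕ → ℝ) (P : Polynomial ℝ) : Polynomial ℝ :=
  ∑ j ∈ Finset.range q, C (a j / ((q : ℝ) - j)) * P ^ j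

noncomputable def Apoly (q : ℕ) (a : ℕ → ℝ) (P : Polynomial ℝ) : Polynomial ℝ :=
  ∑ j ∈ Finset.range q, C (a j) * P ^ j

-- ntd/tc of powers
lemma aux_ntd_pow {P : Polynomial ℝ} (hP : P ≠ 0) (n : ℕ) :
    (P ^ n).natTrailingDegree = n * P.natTrailingDegree := by
  induction n with
  | zero => simp
  | succ k ih =>
    rw [pow_succ, Polynomial.natTrailingDegree_mul (pow_ne_zero _ hP) hP, ih]
    ring

lemma aux_tc_pow {P : Polynomial ℝ} (n : ℕ) :
    (P ^ n).trailingCoeff = P.trailingCoeff ^ n := by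
  induction n with
  | zero => simp [Polynomial.trailingCoeff]
  | succ k ih => rw [pow_succ, Polynomial.trailingCoeff_mul, ih, pow_succ]

lemma aux_X_dvd {P : Polynomial ℝ} (n : ℕ) (h : n ≤ P.natTrailingDegree) :
    (X : Polynomial ℝ) ^ n ∣ P := by
  rw [Polynomial.X_pow_dvd_iff]
  intro d hd
  exact Polynomial.coeff_eq_zero_of_lt_natTrailingDegree (lt_of_lt_of_le hd h)

lemma aux_dvd_deriv {P : Polynomial ℝ} {m : ℕ} (h : (X:Polynomial ℝ) ^ m ∣ P) :
    (X : Polynomial ℝ) ^ (m - 1) ∣ derivative P := by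
  obtain ⟨t, rfl⟩ := h
  rw [derivative_mul, derivative_X_pow]
  refine dvd_add ?_ ?_
  · exact Dvd.dvd.mul_right (dvd_mul_left _ _) _
  · exact Dvd.dvd.mul_right (pow_dvd_pow X (Nat.sub_le _ _)) _

lemma aux_wronskian {D B : Polynomial ℝ} (hB : B ≠ 0)
    (hW : derivative D * B - D * derivative B ≠ 0)
    (hlt : (derivative D * B - D * derivative B).natTrailingDegree
      < 2 * B.natTrailingDegree) :
    D ≠ 0 ∧ D.natTrailingDegree < B.natTrailingDegree := by
  have hD : D ≠ 0 := by rintro rfl; simp at hW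
  refine ⟨hD, ?_⟩
  by_contra hge
  push_neg at hge
  have hb1 : 1 ≤ B.natTrailingDegree := by omega
  have main : ∀ (d' b' e : ℕ) (D₁ B₁ : Polynomial ℝ), d' + 1 = (b' + 1) + e →
      derivative (X^(d'+1) * D₁) * (X^(b'+1) * B₁)
        - (X^(d'+1) * D₁) * derivative (X^(b'+1) * B₁)
      = C (e:ℝ) * X^(d'+b'+1) * (D₁ * B₁)
        + X^(d'+b'+2) * (derivative D₁ * B₁ - D₁ * derivative B₁) := by
    intro d' b' e D₁ B₁ hde
    have hc : (C ((d'+1:ℕ):ℝ) : Polynomial ℝ) = C ((b'+1:ℕ):ℝ) + C (e:ℝ) := by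
      rw [← C_add]
      congr 1
      push_cast
      exact_mod_cast congrArg (fun n : ℕ => (n:ℝ)) hde
    rw [derivative_mul, derivative_mul, derivative_X_pow, derivative_X_pow]
    simp only [Nat.add_sub_cancel]
    linear_combination (X^(d'+b'+1) * (D₁*B₁) : Polynomial ℝ) * hc
  obtain ⟨D₁, hD₁⟩ := aux_X_dvd D.natTrailingDegree le_rfl (P := D)
  obtain ⟨B₁, hB₁⟩ := aux_X_dvd B.natTrailingDegree le_rfl (P := B)
  set d := D.natTrailingDegree with hd
  set b := B.natTrailingDegree with hbdef
  obtain ⟨e, he⟩ : ∃ e, d = b + e := ⟨d - b, by omega⟩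
  have hd1 : d = (d-1)+1 := by omega
  have hb2 : b = (b-1)+1 := by omega
  rw [hd1] at hD₁
  rw [hb2] at hB₁
  have hde : (d-1) + 1 = ((b-1) + 1) + e := by omega
  have key := main (d-1) (b-1) e D₁ B₁ hde
  rw [← hD₁, ← hB₁] at key
  have hdvd : (X : Polynomial ℝ) ^ (2*b) ∣ derivative D * B - D * derivative B := by
    rw [key]
    refine dvd_add ?_ ?_
    · rcases Nat.eq_zero_or_pos e with he0 | he0
      · simp [he0]
      · refine Dvd.dvd.mul_right (Dvd.dvd.mul_left (pow_dvd_pow X ?_) _) _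
        omega
    · exact Dvd.dvd.mul_right (pow_dvd_pow X (by omega)) _
  have := Polynomial.le_natTrailingDegree hW (fun m hm =>
    (Polynomial.X_pow_dvd_iff.mp hdvd) m hm)
  omega

lemma aux_N_deriv (q : ℕ) (hq : 1 ≤ q) (a : ℕ → ℝ) (P : Polynomial ℝ) :
    derivative (Npoly q a P) * P + Apoly q a P * derivative P
      = C (q:ℝ) * Npoly q a P * derivative P := by
  unfold Npoly Apoly
  simp only [derivative_sum, Finset.sum_mul, Finset.mul_sum]
  rw [← Finset.sum_add_distrib]
  refine Finset.sum_congr rfl ?_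
  intro j hj
  rw [Finset.mem_range] at hj
  have hqj : (q:ℝ) - (j:ℝ) ≠ 0 := by
    have : (j:ℝ) < q := by exact_mod_cast hj
    linarith
  have hC : (C (a j) : Polynomial ℝ) = C (a j / ((q:ℝ) - j)) * (C (q:ℝ) - C (j:ℝ)) := by
    rw [← C_sub, ← C_mul, div_mul_cancel₀ _ hqj]
  rcases Nat.eq_zero_or_pos j with rfl | hj1
  · simp only [pow_zero, mul_one, derivative_C, zero_mul, zero_add, Nat.cast_zero]
    rw [hC]
    simp only [Nat.cast_zero, map_zero, sub_zero, mul_zero, zero_mul]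
    ring
  · obtain ⟨k, rfl⟩ : ∃ k, j = k + 1 := ⟨j - 1, by omega⟩
    rw [derivative_mul, derivative_C, derivative_pow]
    simp only [Nat.add_sub_cancel, zero_mul, zero_add]
    rw [hC]
    push_cast
    ring

lemma aux_main_id (q : ℕ) (hq : 1 ≤ q) (a : ℕ → ℝ) (P₁ P₂ : Polynomial ℝ) :
    derivative (Npoly q a P₂ * P₁^q - Npoly q a P₁ * P₂^q) * (P₁^q * P₂^q)
      - (Npoly q a P₂ * P₁^q - Npoly q a P₁ * P₂^q) * derivative (P₁^q * P₂^q)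
    = P₁^(q-1) * P₂^(q-1) *
        (Apoly q a P₁ * derivative P₁ * P₂^(q+1)
          - Apoly q a P₂ * derivative P₂ * P₁^(q+1)) := by
  obtain ⟨k, rfl⟩ : ∃ k, q = k + 1 := ⟨q - 1, by omega⟩
  have R₁ := aux_N_deriv (k+1) hq a P₁
  have R₂ := aux_N_deriv (k+1) hq a P₂
  rw [derivative_sub, derivative_mul, derivative_mul, derivative_mul,
    derivative_pow, derivative_pow]
  simp only [Nat.add_sub_cancel]
  linear_combination (P₁^(k+1) * P₁^(k+1) * P₂^k : Polynomial ℝ) * R₂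
    - (P₁^k * P₂^(k+1) * P₂^(k+1) : Polynomial ℝ) * R₁

lemma aux_coeff_mul_tc {p r : Polynomial ℝ} (hp : p ≠ 0) (hr : r ≠ 0) :
    (p * r).coeff (p.natTrailingDegree + r.natTrailingDegree)
      = p.trailingCoeff * r.trailingCoeff := by
  rw [← Polynomial.natTrailingDegree_mul hp hr, ← Polynomial.trailingCoeff_mul]
  rfl

lemma aux_Apoly_facts (q : ℕ) (hq : 1 ≤ q) (a : ℕ → ℝ) (ha : a 0 ≠ 0)
    {P : Polynomial ℝ} (h0 : P.coeff 0 = 0) :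
    (Apoly q a P).coeff 0 = a 0 ∧ Apoly q a P ≠ 0 ∧
      (Apoly q a P).natTrailingDegree = 0 ∧ (Apoly q a P).trailingCoeff = a 0 := by
  have he0 : P.eval 0 = 0 := by rw [← Polynomial.coeff_zero_eq_eval_zero, h0]
  have hc : (Apoly q a P).coeff 0 = a 0 := by
    rw [Polynomial.coeff_zero_eq_eval_zero]
    unfold Apoly
    rw [Polynomial.eval_finset_sum]
    simp only [eval_mul, eval_pow, eval_C, he0]
    rw [Finset.sum_eq_single_of_mem 0 (Finset.mem_range.mpr hq)]
    · simp
    · intro j _ hj0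
      simp [zero_pow hj0]
  have hne : Apoly q a P ≠ 0 := fun h => ha (by simp [h] at hc; exact hc.symm ▸ rfl)
  have hntd : (Apoly q a P).natTrailingDegree = 0 :=
    Nat.le_zero.mp (Polynomial.natTrailingDegree_le_of_ne_zero (hc ▸ ha))
  refine ⟨hc, hne, hntd, ?_⟩
  rw [Polynomial.trailingCoeff, hntd, hc]

lemma aux_deriv_facts {P : Polynomial ℝ} (hm : 1 ≤ P.natTrailingDegree) :
    derivative P ≠ 0 ∧
      (derivative P).natTrailingDegree = P.natTrailingDegree - 1 ∧
      (derivative P).trailingCoeff = P.natTrailingDegree * P.trailingCoeff := by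
  have hP : P ≠ 0 := by
    rintro rfl; simp at hm
  have htc : P.trailingCoeff ≠ 0 := mt Polynomial.trailingCoeff_eq_zero.mp hP
  set m := P.natTrailingDegree with hmdef
  have hc : (derivative P).coeff (m - 1) = m * P.trailingCoeff := by
    rw [Polynomial.coeff_derivative]
    have h1 : m - 1 + 1 = m := by omega
    rw [h1]
    have h2 : ((m - 1 : ℕ) : ℝ) + 1 = (m : ℝ) := by
      rw [Nat.cast_sub hm]; push_cast; ring
    rw [h2, Polynomial.trailingCoeff]
    ring
  have hcne : (derivative P).coeff (m - 1) ≠ 0 := by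
    rw [hc]
    exact mul_ne_zero (by exact_mod_cast Nat.one_le_iff_ne_zero.mp hm) htc
  have hdne : derivative P ≠ 0 := fun h => hcne (by simp [h])
  have hlow : ∀ t < m - 1, (derivative P).coeff t = 0 := by
    intro t ht
    rw [Polynomial.coeff_derivative,
      Polynomial.coeff_eq_zero_of_lt_natTrailingDegree (by omega), zero_mul]
  have hntd : (derivative P).natTrailingDegree = m - 1 :=
    le_antisymm (Polynomial.natTrailingDegree_le_of_ne_zero hcne)
      (Polynomial.le_natTrailingDegree hdne hlow)
  exact ⟨hdne, hntd, by rw [Polynomial.trailingCoeff, hntd, hc]⟩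

lemma aux_arith1 (q m₁ m₂ : ℕ) (hq : 1 ≤ q) (h1 : 1 ≤ m₁) (hlt : m₁ < m₂) :
    m₂ - 1 + (q+1) * m₁ < m₁ - 1 + (q+1) * m₂ := by
  obtain ⟨n₁, rfl⟩ : ∃ n, m₁ = n + 1 := ⟨m₁ - 1, by omega⟩
  obtain ⟨n₂, rfl⟩ : ∃ n, m₂ = n + 1 := ⟨m₂ - 1, by omega⟩
  simp only [Nat.add_sub_cancel]
  nlinarith [hlt, hq]

lemma aux_arith2 (q m₁ m₂ : ℕ) (hq : 1 ≤ q) (h1 : 1 ≤ m₁) (h2 : 1 ≤ m₂) :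
    m₂ - 1 + (q+1) * m₁ < (q+1) * (m₁ + m₂) := by
  obtain ⟨n₁, rfl⟩ : ∃ n, m₁ = n + 1 := ⟨m₁ - 1, by omega⟩
  obtain ⟨n₂, rfl⟩ : ∃ n, m₂ = n + 1 := ⟨m₂ - 1, by omega⟩
  simp only [Nat.add_sub_cancel]
  nlinarith [hq]


lemma aux_V (q : ℕ) (hq : 1 ≤ q) (a : ℕ → ℝ) (ha : 0 < a 0)
    (P₁ P₂ : Polynomial ℝ) (hne : P₁ ≠ P₂)
    (h₁0 : P₁.coeff 0 = 0) (h₂0 : P₂.coeff 0 = 0)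
    (h₁short : P₁.natDegree < (q + 1) * P₁.natTrailingDegree)
    (h₂short : P₂.natDegree < (q + 1) * P₂.natTrailingDegree)
    (hc₁ : 0 < P₁.trailingCoeff) (hc₂ : 0 < P₂.trailingCoeff)
    (hm : P₁.natTrailingDegree ≤ P₂.natTrailingDegree) :
    (Apoly q a P₁ * derivative P₁ * P₂^(q+1)
      - Apoly q a P₂ * derivative P₂ * P₁^(q+1)) ≠ 0 ∧
    (Apoly q a P₁ * derivative P₁ * P₂^(q+1)
      - Apoly q a P₂ * derivative P₂ * P₁^(q+1)).natTrailingDegree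
      < (q+1) * (P₁.natTrailingDegree + P₂.natTrailingDegree) := by
  set V := Apoly q a P₁ * derivative P₁ * P₂^(q+1)
      - Apoly q a P₂ * derivative P₂ * P₁^(q+1) with hV
  -- basic facts
  have hP₁ : P₁ ≠ 0 := fun h => by simp [h] at hc₁
  have hP₂ : P₂ ≠ 0 := fun h => by simp [h] at hc₂
  set m₁ := P₁.natTrailingDegree with hm₁def
  set m₂ := P₂.natTrailingDegree with hm₂def
  have hm₁ : 1 ≤ m₁ := by
    rcases Nat.eq_zero_or_pos m₁ with h | h
    · rw [h, Nat.mul_zero] at h₁short; omega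
    · exact h
  have hm₂ : 1 ≤ m₂ := le_trans hm₁ hm
  obtain ⟨hA₁c, hA₁ne, hA₁ntd, hA₁tc⟩ := aux_Apoly_facts q hq a (ne_of_gt ha) h₁0
  obtain ⟨hA₂c, hA₂ne, hA₂ntd, hA₂tc⟩ := aux_Apoly_facts q hq a (ne_of_gt ha) h₂0
  obtain ⟨hd₁ne, hd₁ntd, hd₁tc⟩ := aux_deriv_facts hm₁
  obtain ⟨hd₂ne, hd₂ntd, hd₂tc⟩ := aux_deriv_facts hm₂
  have hp₁ne : P₁ ^ (q+1) ≠ 0 := pow_ne_zero _ hP₁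
  have hp₂ne : P₂ ^ (q+1) ≠ 0 := pow_ne_zero _ hP₂
  -- the two products
  have hT₁ne : Apoly q a P₁ * derivative P₁ * P₂^(q+1) ≠ 0 :=
    mul_ne_zero (mul_ne_zero hA₁ne hd₁ne) hp₂ne
  have hT₂ne : Apoly q a P₂ * derivative P₂ * P₁^(q+1) ≠ 0 :=
    mul_ne_zero (mul_ne_zero hA₂ne hd₂ne) hp₁ne
  have hT₁ntd : (Apoly q a P₁ * derivative P₁ * P₂^(q+1)).natTrailingDegree
      = (m₁ - 1) + (q+1) * m₂ := by
    rw [Polynomial.natTrailingDegree_mul (mul_ne_zero hA₁ne hd₁ne) hp₂ne,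
      Polynomial.natTrailingDegree_mul hA₁ne hd₁ne, hA₁ntd, hd₁ntd,
      aux_ntd_pow hP₂, zero_add]
  have hT₂ntd : (Apoly q a P₂ * derivative P₂ * P₁^(q+1)).natTrailingDegree
      = (m₂ - 1) + (q+1) * m₁ := by
    rw [Polynomial.natTrailingDegree_mul (mul_ne_zero hA₂ne hd₂ne) hp₁ne,
      Polynomial.natTrailingDegree_mul hA₂ne hd₂ne, hA₂ntd, hd₂ntd,
      aux_ntd_pow hP₁, zero_add]
  have hT₁tc : (Apoly q a P₁ * derivative P₁ * P₂^(q+1)).trailingCoeff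
      = a 0 * ((m₁ : ℝ) * P₁.trailingCoeff) * P₂.trailingCoeff^(q+1) := by
    rw [Polynomial.trailingCoeff_mul, Polynomial.trailingCoeff_mul, hA₁tc, hd₁tc,
      aux_tc_pow]
  have hT₂tc : (Apoly q a P₂ * derivative P₂ * P₁^(q+1)).trailingCoeff
      = a 0 * ((m₂ : ℝ) * P₂.trailingCoeff) * P₁.trailingCoeff^(q+1) := by
    rw [Polynomial.trailingCoeff_mul, Polynomial.trailingCoeff_mul, hA₂tc, hd₂tc,
      aux_tc_pow]
  -- suffices to find a coefficient
  suffices h : ∃ K, V.coeff K ≠ 0 ∧ K < (q+1) * (m₁ + m₂) by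
    obtain ⟨K, hK1, hK2⟩ := h
    have hVne : V ≠ 0 := fun h => hK1 (by simp [h])
    exact ⟨hVne, lt_of_le_of_lt (Polynomial.natTrailingDegree_le_of_ne_zero hK1) hK2⟩
  rcases lt_or_eq_of_le hm with hmlt | hmeq
  · -- Case A : m₁ < m₂
    refine ⟨(m₂ - 1) + (q+1) * m₁, ?_, ?_⟩
    · rw [hV, Polynomial.coeff_sub]
      have h1 : (Apoly q a P₁ * derivative P₁ * P₂^(q+1)).coeff ((m₂ - 1) + (q+1) * m₁) = 0 := by
        apply Polynomial.coeff_eq_zero_of_lt_natTrailingDegree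
        rw [hT₁ntd]
        exact aux_arith1 q m₁ m₂ hq hm₁ hmlt
      rw [h1, zero_sub]
      have h2 : (Apoly q a P₂ * derivative P₂ * P₁^(q+1)).coeff ((m₂ - 1) + (q+1) * m₁)
          = a 0 * ((m₂ : ℝ) * P₂.trailingCoeff) * P₁.trailingCoeff^(q+1) := by
        rw [← hT₂tc, Polynomial.trailingCoeff, hT₂ntd]
      rw [h2]
      have : 0 < a 0 * ((m₂ : ℝ) * P₂.trailingCoeff) * P₁.trailingCoeff^(q+1) := by
        apply mul_pos (mul_pos ha (mul_pos _ hc₂)) (pow_pos hc₁ _)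
        exact_mod_cast hm₂
      simp only [neg_ne_zero]
      exact ne_of_gt this
    · exact aux_arith2 q m₁ m₂ hq hm₁ hm₂
  · -- m₁ = m₂
    rcases ne_or_eq P₁.trailingCoeff P₂.trailingCoeff with hcne | hceq
    · -- Case B
      refine ⟨(m₁ - 1) + (q+1) * m₂, ?_, ?_⟩
      · rw [hV, Polynomial.coeff_sub]
        have h1 : (Apoly q a P₁ * derivative P₁ * P₂^(q+1)).coeff ((m₁ - 1) + (q+1) * m₂)
            = a 0 * ((m₁ : ℝ) * P₁.trailingCoeff) * P₂.trailingCoeff^(q+1) := by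
          rw [← hT₁tc, Polynomial.trailingCoeff, hT₁ntd]
        have h2 : (Apoly q a P₂ * derivative P₂ * P₁^(q+1)).coeff ((m₁ - 1) + (q+1) * m₂)
            = a 0 * ((m₂ : ℝ) * P₂.trailingCoeff) * P₁.trailingCoeff^(q+1) := by
          rw [← hT₂tc, Polynomial.trailingCoeff, hT₂ntd, hmeq]
        rw [h1, h2]
        set c₁ := P₁.trailingCoeff
        set c₂ := P₂.trailingCoeff
        have hpowne : c₁ ^ q ≠ c₂ ^ q := by
          rcases lt_trichotomy c₁ c₂ with h | h | h
          · exact ne_of_lt (pow_lt_pow_left₀ h hc₁.le (by omega))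
          · exact absurd h hcne
          · exact (ne_of_lt (pow_lt_pow_left₀ h hc₂.le (by omega))).symm
        intro h
        have hm0 : (m₁ : ℝ) ≠ 0 := by
          have : (0:ℝ) < m₁ := by exact_mod_cast hm₁
          linarith
        have hxy : c₁ * c₂^(q+1) = c₂ * c₁^(q+1) := by
          apply mul_left_cancel₀ (mul_ne_zero (ne_of_gt ha) hm0)
          rw [← hmeq] at h
          linear_combination h
        have : c₂ ^ q = c₁ ^ q := by
          apply mul_left_cancel₀ (mul_ne_zero (ne_of_gt hc₁) (ne_of_gt hc₂))
          linear_combination hxy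
        exact hpowne this.symm
      · have h := aux_arith2 q m₂ m₁ hq hm₂ hm₁
        rwa [Nat.add_comm m₂ m₁] at h
    · -- Case C : m₁ = m₂ =: m, c₁ = c₂ =: c
      set g : Polynomial ℝ := P₂ - P₁ with hgdef
      have hg : g ≠ 0 := sub_ne_zero.mpr (Ne.symm hne)
      set r := g.natTrailingDegree with hrdef
      have hδ : g.trailingCoeff ≠ 0 := mt Polynomial.trailingCoeff_eq_zero.mp hg
      have e₁ : P₁.coeff m₁ = P₁.trailingCoeff := rfl
      have e₂ : P₂.coeff m₂ = P₂.trailingCoeff := rfl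
      have hrge : m₁ + 1 ≤ r := by
        apply Polynomial.le_natTrailingDegree hg
        intro t ht
        rw [hgdef, Polynomial.coeff_sub]
        rcases Nat.lt_or_ge t m₁ with h | h
        · rw [Polynomial.coeff_eq_zero_of_lt_natTrailingDegree
            (show t < P₂.natTrailingDegree from by rw [← hm₂def]; omega),
            Polynomial.coeff_eq_zero_of_lt_natTrailingDegree
            (show t < P₁.natTrailingDegree from by rw [← hm₁def]; omega), sub_self]
        · have ht1 : t = m₁ := by omega
          have e₂' : P₂.coeff m₁ = P₂.trailingCoeff := by rw [hmeq]; exact e₂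
          rw [ht1, e₂', ← hceq, e₁, sub_self]
      have hr1 : 1 ≤ r := by omega
      have hdeg : r < (q+1) * m₁ := by
        have h1 : r ≤ g.natDegree := hrdef ▸ Polynomial.natTrailingDegree_le_natDegree g
        have h2 : g.natDegree ≤ max P₂.natDegree P₁.natDegree := Polynomial.natDegree_sub_le _ _
        rw [← hmeq] at h₂short
        generalize hT : (q+1)*m₁ = T at h₁short h₂short ⊢
        omega
      have hXm₁ : (X : Polynomial ℝ)^m₁ ∣ P₁ := aux_X_dvd m₁ (le_of_eq hm₁def)
      have hXm₂ : (X : Polynomial ℝ)^m₁ ∣ P₂ := aux_X_dvd m₁ (le_of_eq (hmeq.trans hm₂def))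
      have hXr : (X : Polynomial ℝ)^r ∣ g := aux_X_dvd r (le_of_eq hrdef)
      set Sg : Polynomial ℝ := ∑ i ∈ Finset.range (q+1), P₂^i * P₁^(q-i) with hSgdef
      have hgeom : P₂^(q+1) - P₁^(q+1) = Sg * g := by
        have h := geom_sum₂_mul (R := Polynomial ℝ) P₂ P₁ (q+1)
        simp only [Nat.add_sub_cancel] at h
        rw [← h]
      have hSgdvd : (X : Polynomial ℝ)^(q*m₁) ∣ Sg := by
        apply Finset.dvd_sum
        intro i hi
        rw [Finset.mem_range] at hi
        have hiq : i + (q - i) = q := by omega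
        have hsplit : q*m₁ = i*m₁ + (q-i)*m₁ := by rw [← Nat.add_mul, hiq]
        rw [hsplit, pow_add]
        refine mul_dvd_mul ?_ ?_
        · rw [mul_comm i m₁, pow_mul]; exact pow_dvd_pow_of_dvd hXm₂ i
        · rw [mul_comm (q-i) m₁, pow_mul]; exact pow_dvd_pow_of_dvd hXm₁ (q-i)
      have hSgcoeff : Sg.coeff (q*m₁) = ((q+1:ℕ):ℝ) * P₁.trailingCoeff^q := by
        rw [hSgdef, Polynomial.finset_sum_coeff]
        have hterm : ∀ i ∈ Finset.range (q+1),
            (P₂^i * P₁^(q-i)).coeff (q*m₁) = P₁.trailingCoeff^q := by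
          intro i hi
          rw [Finset.mem_range] at hi
          have hiq : i + (q - i) = q := by omega
          have hidx : q*m₁ = (P₂^i).natTrailingDegree + (P₁^(q-i)).natTrailingDegree := by
            rw [aux_ntd_pow hP₂, aux_ntd_pow hP₁, ← hm₂def, ← hm₁def, ← hmeq,
              ← Nat.add_mul, hiq]
          rw [hidx, aux_coeff_mul_tc (pow_ne_zero _ hP₂) (pow_ne_zero _ hP₁),
            aux_tc_pow, aux_tc_pow, ← hceq, ← pow_add, hiq]
        rw [Finset.sum_congr rfl hterm, Finset.sum_const, Finset.card_range, nsmul_eq_mul]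
      have hSgcne : ((q+1:ℕ):ℝ) * P₁.trailingCoeff^q ≠ 0 := by
        apply mul_ne_zero _ (pow_ne_zero _ (ne_of_gt hc₁))
        positivity
      have hSgne : Sg ≠ 0 := by
        intro h
        rw [h, Polynomial.coeff_zero] at hSgcoeff
        exact hSgcne hSgcoeff.symm
      have hSgntd : Sg.natTrailingDegree = q*m₁ :=
        le_antisymm (Polynomial.natTrailingDegree_le_of_ne_zero (hSgcoeff ▸ hSgcne))
          (Polynomial.le_natTrailingDegree hSgne (fun t ht => Polynomial.X_pow_dvd_iff.mp hSgdvd t ht))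
      have hSgtc : Sg.trailingCoeff = ((q+1:ℕ):ℝ) * P₁.trailingCoeff^q := by
        rw [Polynomial.trailingCoeff, hSgntd, hSgcoeff]
      obtain ⟨hdgne, hdgntd, hdgtc⟩ := aux_deriv_facts (show 1 ≤ g.natTrailingDegree from hrdef ▸ hr1)
      have hAsub : (X : Polynomial ℝ)^r ∣ (Apoly q a P₁ - Apoly q a P₂) := by
        unfold Apoly
        rw [← Finset.sum_sub_distrib]
        apply Finset.dvd_sum
        intro j hj
        rw [← mul_sub]
        apply Dvd.dvd.mul_left
        have h := geom_sum₂_mul (R := Polynomial ℝ) P₁ P₂ j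
        rw [← h]
        apply Dvd.dvd.mul_left
        have : P₁ - P₂ = -g := by rw [hgdef]; ring
        rw [this]
        exact dvd_neg.mpr hXr
      have hpowdvd : (X : Polynomial ℝ)^((q+1)*m₁) ∣ P₁^(q+1) := by
        rw [mul_comm, pow_mul]; exact pow_dvd_pow_of_dvd hXm₁ (q+1)
      have hid : V = Apoly q a P₁ * derivative P₁ * (Sg * g)
          + (Apoly q a P₁ - Apoly q a P₂) * derivative P₂ * P₁^(q+1)
          - Apoly q a P₁ * derivative g * P₁^(q+1) := by
        rw [hV, ← hgeom, hgdef, derivative_sub]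
        ring
      refine ⟨r - 1 + (q+1) * m₁, ?_, ?_⟩
      · rw [hid, Polynomial.coeff_sub, Polynomial.coeff_add]
        have hmid : ((Apoly q a P₁ - Apoly q a P₂) * derivative P₂ * P₁^(q+1)).coeff
            (r - 1 + (q+1)*m₁) = 0 := by
          have hdvd : (X : Polynomial ℝ)^(r + (m₁-1) + (q+1)*m₁) ∣
              (Apoly q a P₁ - Apoly q a P₂) * derivative P₂ * P₁^(q+1) := by
            rw [pow_add, pow_add]
            exact mul_dvd_mul (mul_dvd_mul hAsub (aux_dvd_deriv hXm₂)) hpowdvd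
          apply Polynomial.X_pow_dvd_iff.mp hdvd
          generalize hT : (q+1)*m₁ = T
          omega
        have hfst : (Apoly q a P₁ * derivative P₁ * (Sg * g)).coeff (r - 1 + (q+1)*m₁)
            = (a 0 * ((m₁:ℝ) * P₁.trailingCoeff)) *
              (((q+1:ℕ):ℝ) * P₁.trailingCoeff^q * g.trailingCoeff) := by
          have hidx : r - 1 + (q+1)*m₁
              = (Apoly q a P₁ * derivative P₁).natTrailingDegree + (Sg * g).natTrailingDegree := by
            rw [Polynomial.natTrailingDegree_mul hA₁ne hd₁ne, hA₁ntd, hd₁ntd, ← hm₁def,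
              Polynomial.natTrailingDegree_mul hSgne hg, hSgntd, ← hrdef, zero_add]
            have hqm : (q+1)*m₁ = q*m₁ + m₁ := by ring
            rw [hqm]
            generalize q*m₁ = T
            omega
          rw [hidx, aux_coeff_mul_tc (mul_ne_zero hA₁ne hd₁ne) (mul_ne_zero hSgne hg),
            Polynomial.trailingCoeff_mul, Polynomial.trailingCoeff_mul, hA₁tc, hd₁tc,
            ← hm₁def, hSgtc]
        have hthd : (Apoly q a P₁ * derivative g * P₁^(q+1)).coeff (r - 1 + (q+1)*m₁)
            = (a 0 * ((r:ℝ) * g.trailingCoeff)) * P₁.trailingCoeff^(q+1) := by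
          have hidx : r - 1 + (q+1)*m₁
              = (Apoly q a P₁ * derivative g).natTrailingDegree + (P₁^(q+1)).natTrailingDegree := by
            rw [Polynomial.natTrailingDegree_mul hA₁ne hdgne, hA₁ntd, hdgntd, ← hrdef,
              aux_ntd_pow hP₁, ← hm₁def, zero_add]
          rw [hidx, aux_coeff_mul_tc (mul_ne_zero hA₁ne hdgne) hp₁ne,
            Polynomial.trailingCoeff_mul, hA₁tc, hdgtc, ← hrdef, aux_tc_pow]
        rw [hmid, hfst, hthd, add_zero]
        have hrc : (r:ℝ) < (((q+1)*m₁ : ℕ) : ℝ) := by exact_mod_cast hdeg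
        have hfact : (a 0 * ((m₁:ℝ) * P₁.trailingCoeff)) *
              (((q+1:ℕ):ℝ) * P₁.trailingCoeff^q * g.trailingCoeff)
            - (a 0 * ((r:ℝ) * g.trailingCoeff)) * P₁.trailingCoeff^(q+1)
            = a 0 * g.trailingCoeff * P₁.trailingCoeff^(q+1) *
              ((((q+1)*m₁ : ℕ) : ℝ) - (r:ℝ)) := by
          push_cast
          ring
        rw [hfact]
        apply mul_ne_zero (mul_ne_zero (mul_ne_zero (ne_of_gt ha) hδ)
          (pow_ne_zero _ (ne_of_gt hc₁)))
        exact sub_ne_zero.mpr (ne_of_lt hrc).symm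
      · rw [← hmeq]
        have hx : (q+1)*(m₁+m₁) = (q+1)*m₁ + (q+1)*m₁ := by ring
        rw [hx]
        generalize hT : (q+1)*m₁ = T at hdeg ⊢
        omega

lemma aux_arith3 (q m₁ m₂ v : ℕ) (hq : 1 ≤ q) (hv : v < (q+1)*(m₁+m₂)) :
    (q-1)*m₁ + (q-1)*m₂ + v < 2*(q*m₁ + q*m₂) := by
  obtain ⟨k, rfl⟩ : ∃ k, q = k + 1 := ⟨q - 1, by omega⟩
  simp only [Nat.add_sub_cancel]
  nlinarith [hv]

lemma aux_tc_pos {P : Polynomial ℝ} (hP : P ≠ 0)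
    (hpos : ∃ ε > 0, ∀ x ∈ Ioc (0:ℝ) ε, 0 < P.eval x) : 0 < P.trailingCoeff := by
  obtain ⟨ε, hε, hev⟩ := hpos
  obtain ⟨T, hT⟩ := aux_X_dvd P.natTrailingDegree le_rfl (P := P)
  have htcne : P.trailingCoeff ≠ 0 := mt Polynomial.trailingCoeff_eq_zero.mp hP
  have hT0 : T.coeff 0 = P.trailingCoeff := by
    have h := congrArg (fun p : Polynomial ℝ => p.coeff (0 + P.natTrailingDegree)) hT
    simp only [Polynomial.coeff_X_pow_mul] at h
    rw [Polynomial.trailingCoeff, ← h, Nat.zero_add]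
  have hTpos : ∀ x ∈ Ioc (0:ℝ) ε, 0 < T.eval x := by
    intro x hx
    have hx0 : 0 < x := hx.1
    have h := hev x hx
    rw [hT, Polynomial.eval_mul, Polynomial.eval_pow, Polynomial.eval_X] at h
    rcases mul_pos_iff.mp h with ⟨_, h2⟩ | ⟨h1, _⟩
    · exact h2
    · exact absurd (pow_pos hx0 P.natTrailingDegree) (not_lt.mpr h1.le)
  have hlim : Tendsto (fun x => T.eval x) (nhdsWithin 0 (Ioi 0)) (nhds (T.eval 0)) :=
    (T.continuous.tendsto 0).mono_left nhdsWithin_le_nhds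
  have hge : 0 ≤ T.eval 0 := by
    apply ge_of_tendsto hlim
    filter_upwards [Ioc_mem_nhdsGT hε] with x hx
    exact (hTpos x hx).le
  have hne0 : T.eval 0 ≠ 0 := by
    rw [← Polynomial.coeff_zero_eq_eval_zero, hT0]; exact htcne
  have : 0 < T.eval 0 := lt_of_le_of_ne hge (Ne.symm hne0)
  rwa [← Polynomial.coeff_zero_eq_eval_zero, hT0] at this

/-- The function `Q(x) = -x^{-q} (a₀/q + a₁/(q-1) x + ⋯ + a_{q-1} x^{q-1})`. -/
noncomputable def Qfun (q : ℕ) (a : ℕ → ℝ) : ℝ → ℝ :=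
  fun x => -(∑ j ∈ Finset.range q, a j / ((q : ℝ) - j) * x ^ j) / x ^ q

/-- for distinct `q`-short positive polynomials `P₁, P₂`,
`|Q(P₁(x)) - Q(P₂(x))| → ∞` as `x → 0⁺`. -/
theorem stmt5 (q : ℕ) (hq : 1 ≤ q) (a : ℕ → ℝ) (ha : 0 < a 0)
    (P₁ P₂ : Polynomial ℝ) (hne : P₁ ≠ P₂)
    (h₁0 : P₁.coeff 0 = 0) (h₂0 : P₂.coeff 0 = 0)
    (h₁short : P₁.natDegree < (q + 1) * P₁.natTrailingDegree)
    (h₂short : P₂.natDegree < (q + 1) * P₂.natTrailingDegree)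
    (h₁pos : ∃ ε > 0, ∀ x ∈ Ioc (0:ℝ) ε, 0 < P₁.eval x)
    (h₂pos : ∃ ε > 0, ∀ x ∈ Ioc (0:ℝ) ε, 0 < P₂.eval x) :
    Tendsto (fun x => |Qfun q a (P₁.eval x) - Qfun q a (P₂.eval x)|)
      (nhdsWithin 0 (Ioi 0)) atTop := by
  classical
  have hP₁ : P₁ ≠ 0 := by intro h; rw [h] at h₁short; simp at h₁short
  have hP₂ : P₂ ≠ 0 := by intro h; rw [h] at h₂short; simp at h₂short
  have hm₁ : 1 ≤ P₁.natTrailingDegree := by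
    rcases Nat.eq_zero_or_pos P₁.natTrailingDegree with h | h
    · rw [h, Nat.mul_zero] at h₁short; omega
    · exact h
  have hm₂ : 1 ≤ P₂.natTrailingDegree := by
    rcases Nat.eq_zero_or_pos P₂.natTrailingDegree with h | h
    · rw [h, Nat.mul_zero] at h₂short; omega
    · exact h
  have hc₁ : 0 < P₁.trailingCoeff := aux_tc_pos hP₁ h₁pos
  have hc₂ : 0 < P₂.trailingCoeff := aux_tc_pos hP₂ h₂pos
  -- V facts (wlog on order of trailing degrees)
  have keyV : (Apoly q a P₁ * derivative P₁ * P₂^(q+1)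
        - Apoly q a P₂ * derivative P₂ * P₁^(q+1)) ≠ 0 ∧
      (Apoly q a P₁ * derivative P₁ * P₂^(q+1)
        - Apoly q a P₂ * derivative P₂ * P₁^(q+1)).natTrailingDegree
        < (q+1) * (P₁.natTrailingDegree + P₂.natTrailingDegree) := by
    rcases le_total P₁.natTrailingDegree P₂.natTrailingDegree with h | h
    · exact aux_V q hq a ha P₁ P₂ hne h₁0 h₂0 h₁short h₂short hc₁ hc₂ h
    · have h2 := aux_V q hq a ha P₂ P₁ (Ne.symm hne) h₂0 h₁0 h₂short h₁short hc₂ hc₁ h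
      have hflip : Apoly q a P₁ * derivative P₁ * P₂^(q+1)
          - Apoly q a P₂ * derivative P₂ * P₁^(q+1)
          = -(Apoly q a P₂ * derivative P₂ * P₁^(q+1)
            - Apoly q a P₁ * derivative P₁ * P₂^(q+1)) := by ring
      constructor
      · rw [hflip, neg_ne_zero]; exact h2.1
      · rw [hflip, Polynomial.natTrailingDegree_neg,
          Nat.add_comm P₁.natTrailingDegree P₂.natTrailingDegree]
        exact h2.2
  -- the rational function D / B
  set D : Polynomial ℝ := Npoly q a P₂ * P₁^q - Npoly q a P₁ * P₂^q with hD
  set B : Polynomial ℝ := P₁^q * P₂^q with hB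
  have hBne : B ≠ 0 := mul_ne_zero (pow_ne_zero _ hP₁) (pow_ne_zero _ hP₂)
  have hBntd : B.natTrailingDegree = q * P₁.natTrailingDegree + q * P₂.natTrailingDegree := by
    rw [hB, Polynomial.natTrailingDegree_mul (pow_ne_zero _ hP₁) (pow_ne_zero _ hP₂),
      aux_ntd_pow hP₁, aux_ntd_pow hP₂]
  have hWid := aux_main_id q hq a P₁ P₂
  rw [← hD, ← hB] at hWid
  have hWne : derivative D * B - D * derivative B ≠ 0 := by
    rw [hWid]
    exact mul_ne_zero (mul_ne_zero (pow_ne_zero _ hP₁) (pow_ne_zero _ hP₂)) keyV.1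
  have hWlt : (derivative D * B - D * derivative B).natTrailingDegree
      < 2 * B.natTrailingDegree := by
    rw [hWid, Polynomial.natTrailingDegree_mul
        (mul_ne_zero (pow_ne_zero _ hP₁) (pow_ne_zero _ hP₂)) keyV.1,
      Polynomial.natTrailingDegree_mul (pow_ne_zero _ hP₁) (pow_ne_zero _ hP₂),
      aux_ntd_pow hP₁, aux_ntd_pow hP₂, hBntd]
    exact aux_arith3 q _ _ _ hq keyV.2
  obtain ⟨hDne, hDlt⟩ := aux_wronskian hBne hWne hWlt
  -- analytic part
  obtain ⟨D₁, hD₁⟩ := aux_X_dvd D.natTrailingDegree le_rfl (P := D)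
  obtain ⟨B₁, hB₁⟩ := aux_X_dvd B.natTrailingDegree le_rfl (P := B)
  have hD₁0 : D₁.eval 0 = D.trailingCoeff := by
    rw [← Polynomial.coeff_zero_eq_eval_zero]
    have h := congrArg (fun p : Polynomial ℝ => p.coeff (0 + D.natTrailingDegree)) hD₁
    simp only [Polynomial.coeff_X_pow_mul] at h
    rw [Polynomial.trailingCoeff, ← h, Nat.zero_add]
  have hB₁0 : B₁.eval 0 = B.trailingCoeff := by
    rw [← Polynomial.coeff_zero_eq_eval_zero]
    have h := congrArg (fun p : Polynomial ℝ => p.coeff (0 + B.natTrailingDegree)) hB₁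
    simp only [Polynomial.coeff_X_pow_mul] at h
    rw [Polynomial.trailingCoeff, ← h, Nat.zero_add]
  have hD₁ne : D₁.eval 0 ≠ 0 := by
    rw [hD₁0]; exact mt Polynomial.trailingCoeff_eq_zero.mp hDne
  have hB₁ne : B₁.eval 0 ≠ 0 := by
    rw [hB₁0]; exact mt Polynomial.trailingCoeff_eq_zero.mp hBne
  set n := B.natTrailingDegree - D.natTrailingDegree with hn
  have hn1 : 1 ≤ n := by omega
  set L : ℝ := |D₁.eval 0 / B₁.eval 0| with hL
  have hLpos : 0 < L := abs_pos.mpr (div_ne_zero hD₁ne hB₁ne)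
  have h1 : Tendsto (fun x => |D₁.eval x / B₁.eval x|) (nhdsWithin 0 (Ioi 0)) (nhds L) := by
    apply Filter.Tendsto.abs
    exact (((D₁.continuous.tendsto 0).div (B₁.continuous.tendsto 0) hB₁ne)).mono_left
      nhdsWithin_le_nhds
  have h2 : Tendsto (fun x : ℝ => (x^n)⁻¹) (nhdsWithin 0 (Ioi 0)) atTop := by
    apply tendsto_inv_nhdsGT_zero.comp
    apply tendsto_nhdsWithin_of_tendsto_nhds_of_eventually_within
    · have := ((continuous_pow n).tendsto (0:ℝ)).mono_left
        (nhdsWithin_le_nhds (s := Ioi (0:ℝ)))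
      simpa [zero_pow (by omega : n ≠ 0)] using this
    · exact eventually_mem_nhdsWithin.mono (fun x hx => Set.mem_Ioi.mpr (pow_pos (Set.mem_Ioi.mp hx) n))
  have hmain : Tendsto (fun x : ℝ => (x^n)⁻¹ * |D₁.eval x / B₁.eval x|)
      (nhdsWithin 0 (Ioi 0)) atTop := h2.atTop_mul_pos hLpos h1
  -- eventual equality
  obtain ⟨ε₁, hε₁, hev₁⟩ := h₁pos
  obtain ⟨ε₂, hε₂, hev₂⟩ := h₂pos
  apply Filter.Tendsto.congr' _ hmain
  filter_upwards [Ioc_mem_nhdsGT (lt_min hε₁ hε₂)] with x hx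
  have hx0 : 0 < x := hx.1
  have hxne : x ≠ 0 := ne_of_gt hx0
  have hy₁ : 0 < P₁.eval x := hev₁ x ⟨hx.1, le_trans hx.2 (min_le_left _ _)⟩
  have hy₂ : 0 < P₂.eval x := hev₂ x ⟨hx.1, le_trans hx.2 (min_le_right _ _)⟩
  have hQ : Qfun q a (P₁.eval x) - Qfun q a (P₂.eval x) = D.eval x / B.eval x := by
    have hNev : ∀ P : Polynomial ℝ, (Npoly q a P).eval x
        = ∑ j ∈ Finset.range q, a j / ((q:ℝ) - j) * (P.eval x) ^ j := by
      intro P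
      rw [Npoly, Polynomial.eval_finset_sum]
      simp
    rw [hD, hB]
    simp only [Polynomial.eval_sub, Polynomial.eval_mul, Polynomial.eval_pow, hNev]
    unfold Qfun
    rw [div_sub_div _ _ (by positivity : (P₁.eval x)^q ≠ 0) (by positivity : (P₂.eval x)^q ≠ 0)]
    rw [div_eq_div_iff (by positivity) (by positivity)]
    ring
  have hsplit : D.eval x / B.eval x = (x^n)⁻¹ * (D₁.eval x / B₁.eval x) := by
    rw [hD₁, hB₁, Polynomial.eval_mul, Polynomial.eval_mul, Polynomial.eval_pow,
      Polynomial.eval_pow, Polynomial.eval_X]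
    have hbd : B.natTrailingDegree = D.natTrailingDegree + n := by omega
    rw [hbd, pow_add, mul_div_mul_comm]
    congr 1
    rw [div_mul_eq_div_div, div_self (pow_ne_zero _ hxne), one_div]
  rw [hQ, hsplit, abs_mul, abs_inv, abs_pow, abs_of_pos hx0]
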